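/- If P is a symplectic orthogonal 2n×2n real matrix, then P can be written as P = exp(M) for some real matrix M satisfying MᵀJ + JM = 0 and Mᵀ + M = 0 (i.e., M is skew-symmetric and infinitesimally symplectic). -/

import Mathlib

open Matrix

section Realify

variable {n : ℕ}

private noncomputable def realify (S : Matrix (Fin n) (Fin n) ℂ) :
    Matrix (Fin n ⊕ Fin n) (Fin n ⊕ Fin n) ℝ :=
  fromBlocks (S.map Complex.re) (-(S.map Complex.im)) (S.map Complex.im) (S.map Complex.re)

private lemma realify_one : realify (1 : Matrix (Fin n) (Fin n) ℂ) = 1 := by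
  have h1 : (1 : Matrix (Fin n) (Fin n) ℂ).map Complex.re = 1 := by
    ext i j; by_cases h : i = j <;> simp [Matrix.map_apply, Matrix.one_apply, h]
  have h2 : (1 : Matrix (Fin n) (Fin n) ℂ).map Complex.im = 0 := by
    ext i j; by_cases h : i = j <;> simp [Matrix.map_apply, Matrix.one_apply, h]
  rw [realify, h1, h2]
  simp [fromBlocks_one]

private lemma realify_zero : realify (0 : Matrix (Fin n) (Fin n) ℂ) = 0 := by
  have h1 : (0 : Matrix (Fin n) (Fin n) ℂ).map Complex.re = 0 := by
    ext i j; simp [Matrix.map_apply]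
  have h2 : (0 : Matrix (Fin n) (Fin n) ℂ).map Complex.im = 0 := by
    ext i j; simp [Matrix.map_apply]
  rw [realify, h1, h2]
  simp [fromBlocks_zero]

private lemma realify_add (S T : Matrix (Fin n) (Fin n) ℂ) :
    realify (S + T) = realify S + realify T := by
  simp only [realify]
  have h1 : (S + T).map Complex.re = S.map Complex.re + T.map Complex.re := by
    ext i j; simp [Matrix.map_apply]
  have h2 : (S + T).map Complex.im = S.map Complex.im + T.map Complex.im := by
    ext i j; simp [Matrix.map_apply]
  rw [h1, h2, fromBlocks_add]
  congr 1
  abel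

private lemma realify_mul (S T : Matrix (Fin n) (Fin n) ℂ) :
    realify (S * T) = realify S * realify T := by
  have hre : (S * T).map Complex.re
      = S.map Complex.re * T.map Complex.re + -(S.map Complex.im) * T.map Complex.im := by
    ext i j
    simp [Matrix.mul_apply, Matrix.map_apply, Complex.mul_re, Finset.sum_add_distrib,
      sub_eq_add_neg, Finset.sum_neg_distrib]
  have him : (S * T).map Complex.im
      = S.map Complex.im * T.map Complex.re + S.map Complex.re * T.map Complex.im := by
    ext i j
    simp [Matrix.mul_apply, Matrix.map_apply, Complex.mul_im, Finset.sum_add_distrib, add_comm,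
      mul_comm]
  simp only [realify, fromBlocks_multiply, hre, him, Matrix.mul_neg, Matrix.neg_mul]
  congr 1 <;> abel

/-- `realify` bundled as a ring homomorphism. -/
private noncomputable def realifyHom :
    Matrix (Fin n) (Fin n) ℂ →+* Matrix (Fin n ⊕ Fin n) (Fin n ⊕ Fin n) ℝ where
  toFun := realify
  map_one' := realify_one
  map_mul' := realify_mul
  map_zero' := realify_zero
  map_add' := realify_add

private lemma continuous_realify :
    Continuous (realify : Matrix (Fin n) (Fin n) ℂ → _) := by
  apply continuous_matrix
  intro i j
  cases i <;> cases j <;>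
    · simp only [realify, fromBlocks_apply₁₁, fromBlocks_apply₁₂, fromBlocks_apply₂₁,
        fromBlocks_apply₂₂, Matrix.map_apply, Matrix.neg_apply]
      fun_prop

end Realify

section Sphere

private lemma sphere_infinite : (Metric.sphere (0:ℂ) 1).Infinite := by
  have hinj : Set.InjOn (fun t : ℝ => Complex.exp (t * Complex.I)) (Set.Ioo 0 1) := by
    intro a ha b hb hab
    rw [Complex.exp_eq_exp_iff_exists_int] at hab
    obtain ⟨k, hk⟩ := hab
    have him : a = b + k * (2 * Real.pi) := by
      have := congrArg Complex.im hk
      simpa using this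
    have hk0 : k = 0 := by
      by_contra h
      have h2 : (1:ℝ) ≤ |(k:ℝ)| := by
        have : 1 ≤ |k| := Int.one_le_abs h
        exact_mod_cast this
      have hlt : |a - b| < 1 := by
        rw [abs_sub_lt_iff]
        exact ⟨by linarith [ha.1, ha.2, hb.1, hb.2], by linarith [ha.1, ha.2, hb.1, hb.2]⟩
      have h3 : |a - b| = |(k:ℝ)| * |2 * Real.pi| := by
        rw [him, ← abs_mul]; ring_nf
      have h4 : (6:ℝ) ≤ |2 * Real.pi| := by
        rw [abs_of_nonneg (by positivity)]; nlinarith [Real.pi_gt_three]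
      nlinarith
    simp [hk0] at him
    exact him
  have hsub : (fun t : ℝ => Complex.exp (t * Complex.I)) '' Set.Ioo 0 1 ⊆ Metric.sphere 0 1 := by
    rintro - ⟨t, -, rfl⟩
    simp [Complex.norm_exp]
  exact ((Set.Ioo_infinite (by norm_num)).image hinj).mono hsub

end Sphere

section CFCPart

open scoped Matrix.Norms.L2Operator

variable {n : ℕ}

noncomputable instance : CStarAlgebra (Matrix (Fin n) (Fin n) ℂ) := Matrix.instCStarAlgebra

private lemma unitary_exp_skew (U : Matrix (Fin n) (Fin n) ℂ)
    (hU : U ∈ unitary (Matrix (Fin n) (Fin n) ℂ)) :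
    ∃ S : Matrix (Fin n) (Fin n) ℂ, star S = -S ∧ NormedSpace.exp S = U := by
  have hUn : IsStarNormal U := ⟨by
    rw [Commute, SemiconjBy, (Unitary.mem_iff.mp hU).1, (Unitary.mem_iff.mp hU).2]⟩
  obtain ⟨c, hc1, hc2⟩ :=
    (sphere_infinite.diff (Matrix.finite_spectrum U)).nonempty.imp
      (fun (c : ℂ) h => And.intro h.1 h.2)
  have hcabs : ‖c‖ = 1 := by
    rw [mem_sphere_iff_norm] at hc1; simpa using hc1
  have hc0 : c ≠ 0 := by
    intro h; rw [h] at hcabs; simp at hcabs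
  set f : ℂ → ℂ := fun z => Complex.log (-z / c) + Complex.log (-c) with hf
  have hspec : spectrum ℂ U ⊆ Metric.sphere 0 1 := spectrum.subset_circle_of_unitary hU
  have habs1 : ∀ z ∈ spectrum ℂ U, ‖z‖ = 1 := by
    intro z hz
    have := hspec hz
    rw [mem_sphere_iff_norm] at this; simpa using this
  have hslit : ∀ z ∈ spectrum ℂ U, -z / c ∈ Complex.slitPlane := by
    intro z hz
    have hz1 := habs1 z hz
    have hzc : z ≠ c := fun h => hc2 (h ▸ hz)
    have habs : ‖-z / c‖ = 1 := by
      simp [norm_div, hz1, hcabs]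
    rw [Complex.mem_slitPlane_iff]
    by_contra hcon
    push_neg at hcon
    apply hzc
    have hw : (-z / c) = ((-z/c).re : ℂ) := by
      apply Complex.ext <;> simp [hcon.2]
    have habs2 : |(-z/c).re| = 1 := by
      rw [hw] at habs; simpa using habs
    have hre : (-z/c).re = -1 := by
      rcases abs_cases ((-z/c).re) with h | h
      · linarith [hcon.1, h.1, h.2]
      · linarith [h.1]
    have : -z / c = -1 := by rw [hw, hre]; simp
    field_simp at this
    exact neg_inj.mp this
  have hcont : ContinuousOn f (spectrum ℂ U) := by
    apply ContinuousOn.add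
    · exact ContinuousOn.clog (by fun_prop) hslit
    · exact continuousOn_const
  have hre0 : ∀ z ∈ spectrum ℂ U, (f z).re = 0 := by
    intro z hz
    simp [hf, Complex.log_re, norm_div, habs1 z hz, hcabs]
  have hexp : ∀ z ∈ spectrum ℂ U, Complex.exp (f z) = z := by
    intro z hz
    have hz0 : z ≠ 0 := by
      intro h
      have := habs1 z hz
      simp [h] at this
    rw [hf]
    simp only []
    rw [Complex.exp_add, Complex.exp_log (by simp [hc0, hz0] : -z/c ≠ 0),
      Complex.exp_log (by simp [hc0] : -c ≠ 0)]
    field_simp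
  refine ⟨cfc f U, ?_, ?_⟩
  · rw [← cfc_star f U, ← cfc_neg (f := f) (a := U)]
    apply cfc_congr
    intro z hz
    have h0 : (f z).re = 0 := hre0 z hz
    apply Complex.ext <;> simp [h0]
  · have hnormal : IsStarNormal (cfc f U) := cfc_predicate f U
    rw [← CFC.complex_exp_eq_normedSpace_exp hnormal,
      ← cfc_comp' Complex.exp f U (Complex.continuous_exp.continuousOn) hcont]
    calc cfc (Complex.exp ∘ f) U = cfc (id : ℂ → ℂ) U := cfc_congr fun z hz => hexp z hz
    _ = U := cfc_id ℂ U

private lemma realify_exp (S : Matrix (Fin n) (Fin n) ℂ) :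
    realify (NormedSpace.exp S) = NormedSpace.exp (realify S) := by
  letI : NormedAlgebra ℚ (Matrix (Fin n) (Fin n) ℂ) := NormedAlgebra.restrictScalars ℚ ℂ _
  exact NormedSpace.map_exp (realifyHom (n := n)) continuous_realify S

end CFCPart

/-- A symplectic orthogonal matrix has a logarithm that is both skew-symmetric and
infinitesimally symplectic. -/
theorem stmt1 {n : ℕ} (J P : Matrix (Fin n ⊕ Fin n) (Fin n ⊕ Fin n) ℝ)
    (hJ : J = Matrix.fromBlocks 0 (-1) 1 0)
    (hsymp : Pᵀ * J * P = J) (horth : Pᵀ * P = 1) :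
    ∃ M : Matrix (Fin n ⊕ Fin n) (Fin n ⊕ Fin n) ℝ,
      P = NormedSpace.exp M ∧ Mᵀ * J + J * M = 0 ∧ Mᵀ + M = 0 := by
  subst hJ
  -- P commutes with J
  have hPPt : P * Pᵀ = 1 := mul_eq_one_comm.mp horth
  have hcomm : fromBlocks 0 (-1) 1 0 * P = P * fromBlocks 0 (-1) 1 0 := by
    calc fromBlocks 0 (-1) 1 0 * P = P * (Pᵀ * fromBlocks 0 (-1) 1 0 * P) := by
          rw [← Matrix.mul_assoc, ← Matrix.mul_assoc, hPPt, Matrix.one_mul]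
    _ = P * fromBlocks 0 (-1) 1 0 := by rw [hsymp]
  -- block structure
  set A := P.toBlocks₁₁ with hA
  set B := P.toBlocks₁₂ with hB
  have hPB : P = fromBlocks P.toBlocks₁₁ P.toBlocks₁₂ P.toBlocks₂₁ P.toBlocks₂₂ :=
    (fromBlocks_toBlocks P).symm
  rw [hPB] at hcomm
  simp only [fromBlocks_multiply, Matrix.zero_mul, Matrix.neg_mul, Matrix.one_mul,
    Matrix.mul_zero, Matrix.mul_neg, Matrix.mul_one, zero_add, add_zero] at hcomm
  have h21 : P.toBlocks₂₁ = -B := by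
    have := congrArg Matrix.toBlocks₁₁ hcomm
    simp only [toBlocks_fromBlocks₁₁] at this
    rw [hB, ← this]
    simp
  have h22 : P.toBlocks₂₂ = A := by
    have := congrArg Matrix.toBlocks₁₂ hcomm
    simp only [toBlocks_fromBlocks₁₂] at this
    rw [hA]
    exact neg_injective this
  have hP : P = fromBlocks A B (-B) A := by
    rw [hPB, h21, h22, ← hA, ← hB]
  -- orthogonality in block form
  rw [hP] at horth
  rw [fromBlocks_transpose] at horth
  simp only [fromBlocks_multiply, transpose_neg, Matrix.neg_mul, Matrix.mul_neg, neg_neg] at horth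
  rw [show (1 : Matrix (Fin n ⊕ Fin n) (Fin n ⊕ Fin n) ℝ) = fromBlocks 1 0 0 1 from
    fromBlocks_one.symm] at horth
  have h1 : Aᵀ * A + Bᵀ * B = 1 := by
    have := congrArg Matrix.toBlocks₁₁ horth
    simp only [toBlocks_fromBlocks₁₁] at this
    exact this
  have h2 : Bᵀ * A = Aᵀ * B := by
    have := congrArg Matrix.toBlocks₂₁ horth
    simp only [toBlocks_fromBlocks₂₁] at this
    rw [add_neg_eq_zero] at this
    exact this
  -- the complex unitary matrix
  set A' : Matrix (Fin n) (Fin n) ℂ := A.map (⇑Complex.ofRealHom) with hA'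
  set B' : Matrix (Fin n) (Fin n) ℂ := B.map (⇑Complex.ofRealHom) with hB'
  set U : Matrix (Fin n) (Fin n) ℂ := A' - Complex.I • B' with hU
  have hstarA' : star A' = Aᵀ.map (⇑Complex.ofRealHom) := by
    ext i j
    simp [hA', Matrix.star_apply, Matrix.map_apply, Complex.conj_ofReal]
  have hstarB' : star B' = Bᵀ.map (⇑Complex.ofRealHom) := by
    ext i j
    simp [hB', Matrix.star_apply, Matrix.map_apply, Complex.conj_ofReal]
  have hUU : star U * U = 1 := by
    have hstarU : star U = star A' + Complex.I • star B' := by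
      rw [hU, star_sub, star_smul]
      simp
    rw [hstarU, hU]
    rw [Matrix.add_mul, Matrix.mul_sub, Matrix.mul_sub, smul_mul_assoc, smul_mul_assoc,
      mul_smul_comm, mul_smul_comm, smul_smul, Complex.I_mul_I, hstarA', hstarB']
    rw [← Matrix.map_mul, ← Matrix.map_mul, ← Matrix.map_mul, ← Matrix.map_mul]
    rw [h2]
    have hone : (Aᵀ * A).map (⇑Complex.ofRealHom) + (Bᵀ * B).map (⇑Complex.ofRealHom) = 1 := by
      have hadd : (Aᵀ * A).map (⇑Complex.ofRealHom) + (Bᵀ * B).map (⇑Complex.ofRealHom)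
          = (Aᵀ * A + Bᵀ * B).map (⇑Complex.ofRealHom) := by
        ext i j
        simp [Matrix.mul_apply, Matrix.map_apply]
        try push_cast
        try ring
      rw [hadd, h1]
      ext i j
      by_cases h : i = j <;> simp [Matrix.map_apply, Matrix.one_apply, h]
    rw [neg_one_smul, ← hone]
    abel
  have hUmem : U ∈ unitary (Matrix (Fin n) (Fin n) ℂ) :=
    Unitary.mem_iff.mpr ⟨hUU, mul_eq_one_comm.mp hUU⟩
  obtain ⟨S, hSs, hSe⟩ := unitary_exp_skew U hUmem
  have hreU : U.map Complex.re = A := by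
    ext i j
    simp [hU, hA', hB', Matrix.map_apply, Matrix.sub_apply, Matrix.smul_apply]
  have himU : U.map Complex.im = -B := by
    ext i j
    simp [hU, hA', hB', Matrix.map_apply, Matrix.sub_apply, Matrix.smul_apply]
  have hPU : realify U = P := by
    rw [realify, hreU, himU, neg_neg, hP]
  refine ⟨realify S, ?_, ?_, ?_⟩
  · calc P = realify U := hPU.symm
    _ = realify (NormedSpace.exp S) := by rw [hSe]
    _ = NormedSpace.exp (realify S) := realify_exp S
  · -- infinitesimally symplectic
    have hXt : (S.map Complex.re)ᵀ = -(S.map Complex.re) := by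
      ext i j
      have := congrFun (congrFun hSs i) j
      simp only [Matrix.star_apply, Matrix.neg_apply] at this
      have := congrArg Complex.re this
      simp only [Complex.star_def, Complex.conj_re, Complex.neg_re] at this
      simp [Matrix.transpose_apply, Matrix.map_apply, this]
    have hYt : (S.map Complex.im)ᵀ = S.map Complex.im := by
      ext i j
      have := congrFun (congrFun hSs i) j
      simp only [Matrix.star_apply, Matrix.neg_apply] at this
      have := congrArg Complex.im this
      simp only [Complex.star_def, Complex.conj_im, Complex.neg_im] at this
      simp [Matrix.transpose_apply, Matrix.map_apply]
      linarith
    have hMt : (realify S)ᵀ = -(realify S) := by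
      rw [realify, fromBlocks_transpose, transpose_neg, hXt, hYt, Matrix.fromBlocks_neg, neg_neg]
    have hcommJ : realify S * fromBlocks 0 (-1) 1 0 = fromBlocks 0 (-1) 1 0 * realify S := by
      rw [realify]
      simp only [fromBlocks_multiply, Matrix.zero_mul, Matrix.neg_mul, Matrix.one_mul,
        Matrix.mul_zero, Matrix.mul_neg, Matrix.mul_one, zero_add, add_zero, neg_neg, neg_zero]
    rw [hMt, Matrix.neg_mul, hcommJ]
    abel
  · have hXt : (S.map Complex.re)ᵀ = -(S.map Complex.re) := by
      ext i j
      have := congrFun (congrFun hSs i) j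
      simp only [Matrix.star_apply, Matrix.neg_apply] at this
      have := congrArg Complex.re this
      simp only [Complex.star_def, Complex.conj_re, Complex.neg_re] at this
      simp [Matrix.transpose_apply, Matrix.map_apply, this]
    have hYt : (S.map Complex.im)ᵀ = S.map Complex.im := by
      ext i j
      have := congrFun (congrFun hSs i) j
      simp only [Matrix.star_apply, Matrix.neg_apply] at this
      have := congrArg Complex.im this
      simp only [Complex.star_def, Complex.conj_im, Complex.neg_im] at this
      simp [Matrix.transpose_apply, Matrix.map_apply]
      linarith
    have hMt : (realify S)ᵀ = -(realify S) := by
      rw [realify, fromBlocks_transpose, transpose_neg, hXt, hYt, Matrix.fromBlocks_neg, neg_neg]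
    rw [hMt]
    abel
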